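/- If G₁ and G₂ are connected graphs with ldim_f(G₁) = |V(G₁)|/2 and ldim_f(G₂) = |V(G₂)|/2, then their join satisfies ldim_f(G₁ + G₂) = |V(G₁+G₂)|/2. -/

import Mathlib

open scoped Classical
open Finset

namespace FracLocal

/-- The local resolving neighborhood of a (potential) edge `uv`:
vertices whose distances to `u` and `v` differ. -/
noncomputable def locRes {V : Type*} [Fintype V] (G : SimpleGraph V) (u v : V) : Finset V :=
  Finset.univ.filter (fun x => G.dist x u ≠ G.dist x v)

/-- A local resolving function: values in `[0,1]` summing to at least `1`
on every local resolving neighborhood of an edge. -/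
def IsLRF {V : Type*} [Fintype V] (G : SimpleGraph V) (f : V → ℝ) : Prop :=
  (∀ x, 0 ≤ f x ∧ f x ≤ 1) ∧ ∀ u v, G.Adj u v → 1 ≤ ∑ x ∈ locRes G u v, f x

/-- The fractional local metric dimension. -/
noncomputable def ldimf {V : Type*} [Fintype V] (G : SimpleGraph V) : ℝ :=
  sInf {w : ℝ | ∃ f : V → ℝ, IsLRF G f ∧ w = ∑ x, f x}

/-- The (integral) local metric dimension. -/
noncomputable def ldim {V : Type*} [Fintype V] (G : SimpleGraph V) : ℕ :=
  sInf {k : ℕ | ∃ S : Finset V, S.card = k ∧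
    ∀ u v, G.Adj u v → (S ∩ locRes G u v).Nonempty}

/-- `l(G)`: the minimum cardinality of a local resolving neighborhood of an edge. -/
noncomputable def lG {V : Type*} [Fintype V] (G : SimpleGraph V) : ℕ :=
  sInf {k : ℕ | ∃ u v, G.Adj u v ∧ (locRes G u v).card = k}

/-- The closed neighborhood `N[u]`. -/
def closedNbhd {V : Type*} (G : SimpleGraph V) (u : V) : Set V :=
  insert u (G.neighborSet u)

/-- `u` and `v` are true twins: distinct vertices with `N[u] = N[v]`. -/
def TrueTwins {V : Type*} (G : SimpleGraph V) (u v : V) : Prop :=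
  u ≠ v ∧ closedNbhd G u = closedNbhd G v

end FracLocal

namespace FracLocal
/-- The join of two graphs: disjoint union plus all edges across. -/
def joinGraph {α β : Type*} (G : SimpleGraph α) (H : SimpleGraph β) :
    SimpleGraph (α ⊕ β) where
  Adj x y :=
    match x, y with
    | .inl a, .inl b => G.Adj a b
    | .inr a, .inr b => H.Adj a b
    | .inl _, .inr _ => True
    | .inr _, .inl _ => True
  symm := ⟨by rintro (a|a) (b|b) h <;> first | exact h.symm | trivial⟩
  loopless := ⟨by rintro (a|a) h <;> first | exact G.irrefl h | exact H.irrefl h⟩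
end FracLocal


namespace FracLocal
variable {V : Type*} [Fintype V] {G : SimpleGraph V}

lemma ldimf_bddBelow (G : SimpleGraph V) :
    BddBelow {w : ℝ | ∃ f : V → ℝ, IsLRF G f ∧ w = ∑ x, f x} := by
  refine ⟨0, ?_⟩
  rintro w ⟨f, hf, rfl⟩
  exact Finset.sum_nonneg fun x _ => (hf.1 x).1

lemma mem_locRes_left {u v : V} (h : G.Adj u v) : u ∈ locRes G u v := by
  simp only [locRes, Finset.mem_filter, Finset.mem_univ, true_and]
  rw [SimpleGraph.dist_self, SimpleGraph.dist_eq_one_iff_adj.mpr h]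
  simp

lemma mem_locRes_right {u v : V} (h : G.Adj u v) : v ∈ locRes G u v := by
  simp only [locRes, Finset.mem_filter, Finset.mem_univ, true_and]
  rw [SimpleGraph.dist_self, SimpleGraph.dist_eq_one_iff_adj.mpr h.symm]
  simp

lemma locRes_comm (G : SimpleGraph V) (u v : V) : locRes G u v = locRes G v u := by
  ext x
  simp only [locRes, Finset.mem_filter, Finset.mem_univ, true_and]
  exact ne_comm

lemma half_isLRF (G : SimpleGraph V) : IsLRF G (fun _ => (1:ℝ)/2) := by
  refine ⟨fun x => by norm_num, fun u v huv => ?_⟩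
  have hsub : ({u, v} : Finset V) ⊆ locRes G u v := by
    intro x hx
    rcases Finset.mem_insert.mp hx with rfl | hx
    · exact mem_locRes_left huv
    · rw [Finset.mem_singleton] at hx; subst hx; exact mem_locRes_right huv
  calc (1:ℝ) = ∑ _x ∈ ({u, v} : Finset V), (1:ℝ)/2 := by
        rw [Finset.sum_const, Finset.card_pair huv.ne]; norm_num
    _ ≤ ∑ _x ∈ locRes G u v, (1:ℝ)/2 :=
        Finset.sum_le_sum_of_subset_of_nonneg hsub (fun _ _ _ => by norm_num)

lemma twin_adj {u v : V} (h : TrueTwins G u v) : G.Adj u v := by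
  have hu : u ∈ closedNbhd G v := h.2 ▸ Set.mem_insert u _
  rcases hu with h' | h'
  · exact absurd h' h.1
  · exact (G.adj_symm h')

lemma dist_le_of_closed_eq {u v z : V} (hc : G.Connected)
    (h : closedNbhd G u = closedNbhd G v) (hz : z ≠ u) :
    G.dist z v ≤ G.dist z u := by
  obtain ⟨p, hp⟩ := hc.exists_walk_length_eq_dist z u
  have hlen : 0 < p.length := by
    rw [hp]
    exact (hc z u).pos_dist_of_ne hz
  have hnn : ¬ p.reverse.Nil := by
    rw [SimpleGraph.Walk.not_nil_iff_lt_length, SimpleGraph.Walk.length_reverse]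
    exact hlen
  obtain ⟨w, huw, q, hq⟩ := SimpleGraph.Walk.not_nil_iff.mp hnn
  have hql : q.length + 1 = p.length := by
    have := congrArg SimpleGraph.Walk.length hq
    rw [SimpleGraph.Walk.length_reverse, SimpleGraph.Walk.length_cons] at this
    omega
  have hwmem : w ∈ closedNbhd G v := h ▸ Set.mem_insert_of_mem _ huw
  rcases hwmem with hwv | hwv
  · -- w = v
    subst hwv
    have := SimpleGraph.dist_le q.reverse
    rw [SimpleGraph.Walk.length_reverse] at this
    omega
  · have := SimpleGraph.dist_le (SimpleGraph.Walk.cons ((G.mem_neighborSet v w).mp hwv) q).reverse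
    rw [SimpleGraph.Walk.length_reverse, SimpleGraph.Walk.length_cons] at this
    omega

lemma dist_eq_of_twins {u v z : V} (hc : G.Connected) (h : TrueTwins G u v)
    (hz : z ≠ u) (hz' : z ≠ v) : G.dist z u = G.dist z v :=
  le_antisymm (dist_le_of_closed_eq hc h.2.symm hz') (dist_le_of_closed_eq hc h.2 hz)

lemma locRes_twins {u v : V} (hc : G.Connected) (h : TrueTwins G u v) :
    locRes G u v = {u, v} := by
  have hadj := twin_adj h
  ext x
  simp only [locRes, Finset.mem_filter, Finset.mem_univ, true_and, Finset.mem_insert,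
    Finset.mem_singleton]
  constructor
  · intro hx
    by_contra hcon
    push_neg at hcon
    exact hx (dist_eq_of_twins hc h hcon.1 hcon.2)
  · rintro (rfl | rfl)
    · rw [SimpleGraph.dist_self, SimpleGraph.dist_eq_one_iff_adj.mpr hadj]; simp
    · rw [SimpleGraph.dist_self, SimpleGraph.dist_eq_one_iff_adj.mpr hadj.symm]; simp

/-- Lower bound: if every vertex has a true twin then every LRF has weight ≥ n/2. -/
lemma lower_bound (hc : G.Connected) (htw : ∀ x : V, ∃ y, TrueTwins G x y)
    {f : V → ℝ} (hf : IsLRF G f) : (Fintype.card V : ℝ) / 2 ≤ ∑ x, f x := by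
  classical
  set t : V → V := fun x => (htw x).choose with ht_def
  have ht : ∀ x, TrueTwins G x (t x) := fun x => (htw x).choose_spec
  have key : ∀ x, 1 ≤ f x + f (t x) := by
    intro x
    have h1 := hf.2 x (t x) (twin_adj (ht x))
    rwa [locRes_twins hc (ht x), Finset.sum_pair (ht x).1] at h1
  have keypair : ∀ x y : V, x ≠ y → closedNbhd G x = closedNbhd G y → 1 ≤ f x + f y := by
    intro x y hxy hN
    have h1 := hf.2 x y (twin_adj ⟨hxy, hN⟩)
    rwa [locRes_twins hc ⟨hxy, hN⟩, Finset.sum_pair hxy] at h1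
  set S : Finset V := Finset.univ.filter (fun x => f x < 1/2) with hS_def
  have hmemS : ∀ x, x ∈ S ↔ f x < 1/2 := by intro x; simp [hS_def]
  set T : Finset V := S.image t with hT_def
  have hinj : Set.InjOn t S := by
    intro x hx y hy hxy
    by_contra hne
    have hN : closedNbhd G x = closedNbhd G y := by
      rw [(ht x).2, hxy, ← (ht y).2]
    have := keypair x y hne hN
    have := (hmemS x).mp hx
    have := (hmemS y).mp hy
    linarith
  have hdisj : Disjoint S T := by
    rw [Finset.disjoint_left]
    intro a haS haT
    obtain ⟨x, hxS, hxa⟩ := Finset.mem_image.mp haT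
    have h1 := key x
    have h2 := (hmemS x).mp hxS
    have h3 := (hmemS a).mp haS
    rw [hxa] at h1
    linarith
  have hcardT : T.card = S.card := Finset.card_image_of_injOn hinj
  have hsumST : (S.card : ℝ) ≤ ∑ x ∈ S ∪ T, f x := by
    rw [Finset.sum_union hdisj, hT_def, Finset.sum_image (fun x hx y hy => hinj hx hy),
      ← Finset.sum_add_distrib]
    calc (S.card : ℝ) = ∑ _x ∈ S, (1:ℝ) := by rw [Finset.sum_const]; simp
      _ ≤ ∑ x ∈ S, (f x + f (t x)) := Finset.sum_le_sum (fun x _ => key x)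
  have hrest : ((Finset.univ \ (S ∪ T)).card : ℝ) / 2 ≤ ∑ x ∈ Finset.univ \ (S ∪ T), f x := by
    calc ((Finset.univ \ (S ∪ T)).card : ℝ) / 2
        = ∑ _x ∈ Finset.univ \ (S ∪ T), (1:ℝ)/2 := by rw [Finset.sum_const]; push_cast; ring
      _ ≤ ∑ x ∈ Finset.univ \ (S ∪ T), f x := by
          refine Finset.sum_le_sum (fun x hx => ?_)
          have hxS : x ∉ S := fun h => (Finset.mem_sdiff.mp hx).2 (Finset.mem_union_left _ h)
          have := (hmemS x).not.mp hxS
          linarith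
  have hcardU : (S ∪ T).card = 2 * S.card := by
    rw [Finset.card_union_of_disjoint hdisj, hcardT]; ring
  have hle : (S ∪ T).card ≤ Fintype.card V := by
    simpa using Finset.card_le_card (Finset.subset_univ (S ∪ T))
  have hsplit : ∑ x, f x = (∑ x ∈ S ∪ T, f x) + ∑ x ∈ Finset.univ \ (S ∪ T), f x := by
    rw [← Finset.sum_sdiff (Finset.subset_univ (S ∪ T))]; ring
  have hcard' : ((Finset.univ \ (S ∪ T)).card : ℝ) = Fintype.card V - 2 * S.card := by
    rw [Finset.card_sdiff_of_subset (Finset.subset_univ _), Finset.card_univ]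
    rw [hcardU] at hle ⊢
    push_cast [Nat.cast_sub hle]
    ring
  rw [hsplit]
  rw [hcard'] at hrest
  linarith

/-- If `ldimf G = n/2` then every vertex has a true twin. -/
lemma exists_twin_of_ldimf (hc : G.Connected) (hd : ldimf G = (Fintype.card V : ℝ) / 2)
    (u : V) : ∃ v, TrueTwins G u v := by
  classical
  by_contra hno
  push_neg at hno
  -- build the LRF equal to 0 at u and 1/2 elsewhere
  set f : V → ℝ := fun x => if x = u then 0 else 1/2 with hf_def
  have hpair : ∀ v w : V, G.Adj v w → ∃ a b : V, a ≠ b ∧ a ≠ u ∧ b ≠ u ∧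
      a ∈ locRes G v w ∧ b ∈ locRes G v w := by
    have main : ∀ w : V, G.Adj u w → ∃ a b : V, a ≠ b ∧ a ≠ u ∧ b ≠ u ∧
        a ∈ locRes G u w ∧ b ∈ locRes G u w := by
      intro w huw
      have hne : u ≠ w := huw.ne
      have hN : closedNbhd G u ≠ closedNbhd G w := fun h => hno w ⟨hne, h⟩
      have hwu : w ∈ closedNbhd G u := Set.mem_insert_of_mem _ huw
      have huw' : u ∈ closedNbhd G w := Set.mem_insert_of_mem _ huw.symm
      have : ∃ x, (x ∈ closedNbhd G u ∧ x ∉ closedNbhd G w) ∨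
          (x ∈ closedNbhd G w ∧ x ∉ closedNbhd G u) := by
        by_contra hcon
        push_neg at hcon
        apply hN
        ext x
        have := hcon x
        tauto
      obtain ⟨x, hx⟩ := this
      have hxprop : x ≠ u ∧ x ≠ w ∧ G.dist x u ≠ G.dist x w := by
        rcases hx with ⟨hin, hout⟩ | ⟨hin, hout⟩
        · have hxu : x ≠ u := fun h => hout (h ▸ huw')
          have hxw : x ≠ w := fun h => hout (by rw [h]; exact Set.mem_insert _ _)
          have hadj : G.Adj u x := by
            rcases hin with h | h
            · exact absurd h hxu
            · exact h
          have h1 : G.dist x u = 1 := SimpleGraph.dist_eq_one_iff_adj.mpr hadj.symm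
          have h2 : G.dist x w ≠ 1 := by
            intro h
            have := SimpleGraph.dist_eq_one_iff_adj.mp h
            exact hout (Set.mem_insert_of_mem _ this.symm)
          exact ⟨hxu, hxw, by rw [h1]; exact fun h => h2 h.symm⟩
        · have hxw : x ≠ w := fun h => hout (h ▸ hwu)
          have hxu : x ≠ u := fun h => hout (h ▸ Set.mem_insert _ _)
          have hadj : G.Adj w x := by
            rcases hin with h | h
            · exact absurd h hxw
            · exact h
          have h1 : G.dist x w = 1 := SimpleGraph.dist_eq_one_iff_adj.mpr hadj.symm
          have h2 : G.dist x u ≠ 1 := by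
            intro h
            have := SimpleGraph.dist_eq_one_iff_adj.mp h
            exact hout (Set.mem_insert_of_mem _ this.symm)
          exact ⟨hxu, hxw, by rw [h1]; exact fun h => h2 h⟩
      refine ⟨x, w, hxprop.2.1, hxprop.1, hne.symm, ?_, mem_locRes_right huw⟩
      simp only [locRes, Finset.mem_filter, Finset.mem_univ, true_and]
      exact hxprop.2.2
    intro v w hvw
    by_cases hv : v = u
    · subst hv; exact main w hvw
    by_cases hw : w = u
    · obtain ⟨a, b, hab, hau, hbu, ha, hb⟩ := main v (by rw [hw] at hvw; exact hvw.symm)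
      refine ⟨a, b, hab, hau, hbu, ?_, ?_⟩ <;> rw [hw, locRes_comm] <;> assumption
    · exact ⟨v, w, hvw.ne, hv, hw, mem_locRes_left hvw, mem_locRes_right hvw⟩
  have hlrf : IsLRF G f := by
    constructor
    · intro x; by_cases h : x = u <;> simp [hf_def, h] <;> norm_num
    · intro v w hvw
      obtain ⟨a, b, hab, hau, hbu, ha, hb⟩ := hpair v w hvw
      have hsub : ({a, b} : Finset V) ⊆ locRes G v w := by
        intro x hx
        rcases Finset.mem_insert.mp hx with rfl | hx
        · exact ha
        · rw [Finset.mem_singleton] at hx; subst hx; exact hb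
      calc (1:ℝ) = ∑ x ∈ ({a, b} : Finset V), f x := by
            rw [Finset.sum_pair hab]
            simp [hf_def, hau, hbu]
            norm_num
        _ ≤ ∑ x ∈ locRes G v w, f x := by
            refine Finset.sum_le_sum_of_subset_of_nonneg hsub (fun x _ _ => ?_)
            by_cases h : x = u <;> simp [hf_def, h] <;> norm_num
  have hsum : ∑ x, f x = ((Fintype.card V : ℝ) - 1) / 2 := by
    have h2 : ∀ x, f x = 1/2 - (if x = u then (1/2:ℝ) else 0) := by
      intro x; by_cases h : x = u <;> simp [hf_def, h]
    rw [Finset.sum_congr rfl (fun x _ => h2 x), Finset.sum_sub_distrib,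
      Finset.sum_ite_eq' Finset.univ u (fun _ => (1/2:ℝ)), Finset.sum_const, Finset.card_univ]
    simp [nsmul_eq_mul]
    ring
  have hle : ldimf G ≤ ((Fintype.card V : ℝ) - 1) / 2 :=
    csInf_le (ldimf_bddBelow G) ⟨f, hlrf, hsum.symm⟩
  rw [hd] at hle
  linarith

section Join
variable {V₁ V₂ : Type*} [Fintype V₁] [Fintype V₂]
  {G₁ : SimpleGraph V₁} {G₂ : SimpleGraph V₂}

lemma joinGraph_adj_lr (a : V₁) (b : V₂) : (joinGraph G₁ G₂).Adj (.inl a) (.inr b) := trivial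
lemma joinGraph_adj_rl (a : V₂) (b : V₁) : (joinGraph G₁ G₂).Adj (.inr a) (.inl b) := trivial
lemma joinGraph_adj_ll {a b : V₁} : (joinGraph G₁ G₂).Adj (.inl a) (.inl b) ↔ G₁.Adj a b :=
  Iff.rfl
lemma joinGraph_adj_rr {a b : V₂} : (joinGraph G₁ G₂).Adj (.inr a) (.inr b) ↔ G₂.Adj a b :=
  Iff.rfl

lemma joinGraph_connected [Nonempty V₁] [Nonempty V₂] :
    (joinGraph G₁ G₂).Connected := by
  rw [SimpleGraph.connected_iff]
  refine ⟨?_, inferInstance⟩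
  have c₁ : V₁ := Classical.arbitrary V₁
  have c₂ : V₂ := Classical.arbitrary V₂
  rintro (a | a) (b | b)
  · exact ⟨.cons (joinGraph_adj_lr a c₂) (.cons (joinGraph_adj_rl c₂ b) .nil)⟩
  · exact ⟨.cons (joinGraph_adj_lr a b) .nil⟩
  · exact ⟨.cons (joinGraph_adj_rl a b) .nil⟩
  · exact ⟨.cons (joinGraph_adj_rl a c₁) (.cons (joinGraph_adj_lr c₁ b) .nil)⟩

lemma twins_join_inl {u v : V₁} (h : TrueTwins G₁ u v) :
    TrueTwins (joinGraph G₁ G₂) (.inl u) (.inl v) := by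
  refine ⟨fun hc => h.1 (Sum.inl.inj hc), ?_⟩
  ext x
  cases x with
  | inl a =>
    have : ∀ w : V₁, (Sum.inl a : V₁ ⊕ V₂) ∈ closedNbhd (joinGraph G₁ G₂) (.inl w) ↔
        a ∈ closedNbhd G₁ w := by
      intro w
      simp only [closedNbhd, Set.mem_insert_iff, SimpleGraph.mem_neighborSet,
        Sum.inl.injEq]
      exact or_congr Iff.rfl joinGraph_adj_ll
    rw [this u, this v, h.2]
  | inr b =>
    simp only [closedNbhd, Set.mem_insert_iff, SimpleGraph.mem_neighborSet]
    constructor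
    · intro _; exact Or.inr (joinGraph_adj_lr v b)
    · intro _; exact Or.inr (joinGraph_adj_lr u b)

lemma twins_join_inr {u v : V₂} (h : TrueTwins G₂ u v) :
    TrueTwins (joinGraph G₁ G₂) (.inr u) (.inr v) := by
  refine ⟨fun hc => h.1 (Sum.inr.inj hc), ?_⟩
  ext x
  cases x with
  | inl a =>
    simp only [closedNbhd, Set.mem_insert_iff, SimpleGraph.mem_neighborSet]
    constructor
    · intro _; exact Or.inr (joinGraph_adj_rl v a)
    · intro _; exact Or.inr (joinGraph_adj_rl u a)
  | inr b =>
    have : ∀ w : V₂, (Sum.inr b : V₁ ⊕ V₂) ∈ closedNbhd (joinGraph G₁ G₂) (.inr w) ↔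
        b ∈ closedNbhd G₂ w := by
      intro w
      simp only [closedNbhd, Set.mem_insert_iff, SimpleGraph.mem_neighborSet,
        Sum.inr.injEq]
      exact or_congr Iff.rfl joinGraph_adj_rr
    rw [this u, this v, h.2]

end Join
end FracLocal

open FracLocal in
/-- If connected graphs `G₁`, `G₂` satisfy `ldim_f(Gᵢ) = |V(Gᵢ)|/2`,
then their join satisfies `ldim_f(G₁ + G₂) = |V(G₁ + G₂)|/2`. -/
theorem stmt_5 {V₁ V₂ : Type*} [Fintype V₁] [Fintype V₂]
    (G₁ : SimpleGraph V₁) (G₂ : SimpleGraph V₂)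
    (h₁c : G₁.Connected) (h₂c : G₂.Connected)
    (h₁ : ldimf G₁ = (Fintype.card V₁ : ℝ) / 2)
    (h₂ : ldimf G₂ = (Fintype.card V₂ : ℝ) / 2) :
    ldimf (joinGraph G₁ G₂) = (Fintype.card (V₁ ⊕ V₂) : ℝ) / 2 := by
  have hne₁ : Nonempty V₁ := h₁c.nonempty
  have hne₂ : Nonempty V₂ := h₂c.nonempty
  have hjc : (joinGraph G₁ G₂).Connected := joinGraph_connected
  have htw : ∀ x : V₁ ⊕ V₂, ∃ y, TrueTwins (joinGraph G₁ G₂) x y := by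
    rintro (a | a)
    · obtain ⟨b, hb⟩ := exists_twin_of_ldimf h₁c h₁ a
      exact ⟨.inl b, twins_join_inl hb⟩
    · obtain ⟨b, hb⟩ := exists_twin_of_ldimf h₂c h₂ a
      exact ⟨.inr b, twins_join_inr hb⟩
  have hwit : ((Fintype.card (V₁ ⊕ V₂) : ℝ) / 2) ∈
      {w : ℝ | ∃ f : V₁ ⊕ V₂ → ℝ, IsLRF (joinGraph G₁ G₂) f ∧ w = ∑ x, f x} := by
    refine ⟨fun _ => (1:ℝ)/2, half_isLRF _, ?_⟩
    rw [Finset.sum_const, Finset.card_univ, nsmul_eq_mul]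
    ring
  refine le_antisymm (csInf_le (ldimf_bddBelow _) hwit) ?_
  refine le_csInf ⟨_, hwit⟩ ?_
  rintro w ⟨f, hf, rfl⟩
  exact lower_bound hjc htw hf
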